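/- For λ ∈ ℂ with λ not a positive integer, the function Φ^{(α,β)}_{-iλ}(t) = (2 cosh t)^{λ-ρ} ₂F₁((ρ-λ)/2, (α-β+1-λ)/2; 1-λ; cosh^{-2}t), with ρ = α+β+1, satisfies the asymptotic behavior Φ^{(α,β)}_{-iλ}(t) = e^{(λ-ρ)t}(1 + o(1)) as t → ∞; in particular, lim_{t→∞} e^{(ρ-λ)t} Φ^{(α,β)}_{-iλ}(t) = 1. -/

import Mathlib

open Real Complex Filter

/-- The Gauss hypergeometric series `₂F₁(a,b;c;z)`. -/
noncomputable def hyp2F1 (a b c z : ℂ) : ℂ :=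
  ∑' k : ℕ, ((ascPochhammer ℂ k).eval a * (ascPochhammer ℂ k).eval b /
    ((ascPochhammer ℂ k).eval c * (Nat.factorial k : ℂ))) * z ^ k

/-- The Harish-Chandra series solution `Φ^{(α,β)}_{-iλ}(t)`. -/
noncomputable def jacobiHCPhi (α β : ℝ) (lam : ℂ) (t : ℝ) : ℂ :=
  ((2 * Real.cosh t : ℝ) : ℂ) ^ (lam - ((α : ℂ) + β + 1)) *
    hyp2F1 ((((α : ℂ) + β + 1) - lam) / 2) (((α : ℂ) - β + 1 - lam) / 2) (1 - lam)
      ((Real.cosh t ^ 2 : ℝ) : ℂ)⁻¹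

namespace JacobiAux

/-- The `k`-th coefficient of the hypergeometric series. -/
noncomputable def coefHG (a b c : ℂ) (k : ℕ) : ℂ :=
  (ascPochhammer ℂ k).eval a * (ascPochhammer ℂ k).eval b /
    ((ascPochhammer ℂ k).eval c * (Nat.factorial k : ℂ))

lemma coefHG_zero (a b c : ℂ) : coefHG a b c 0 = 1 := by
  simp [coefHG]

lemma asc_ne_zero {c : ℂ} (hc : ∀ k : ℕ, c + k ≠ 0) (k : ℕ) :
    (ascPochhammer ℂ k).eval c ≠ 0 := by
  intro h0
  rw [ascPochhammer_eval_eq_zero_iff] at h0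
  obtain ⟨j, _, hj⟩ := h0
  exact hc j (by rw [hj]; ring)

lemma coefHG_succ {a b c : ℂ} (hc : ∀ k : ℕ, c + k ≠ 0) (k : ℕ) :
    coefHG a b c (k + 1) = coefHG a b c k * ((a + k) * (b + k) / ((c + k) * (k + 1))) := by
  have h1 : (ascPochhammer ℂ k).eval c ≠ 0 := asc_ne_zero hc k
  have h2 : c + (k : ℂ) ≠ 0 := hc k
  have h3 : ((Nat.factorial k : ℕ) : ℂ) ≠ 0 := Nat.cast_ne_zero.2 (Nat.factorial_ne_zero k)
  have h4 : ((k : ℂ) + 1) ≠ 0 := by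
    have := Nat.cast_ne_zero (R := ℂ).2 (Nat.succ_ne_zero k)
    push_cast at this; exact this
  simp only [coefHG, ascPochhammer_succ_eval, Nat.factorial_succ]
  push_cast
  field_simp

/-- The coefficients grow at most like `C * 2^k`. -/
lemma coefHG_bound (a b c : ℂ) (hc : ∀ k : ℕ, c + k ≠ 0) :
    ∃ C : ℝ, 0 ≤ C ∧ ∀ k : ℕ, ‖coefHG a b c k‖ ≤ C * 2 ^ k := by
  set A : ℝ := max (max ‖a‖ ‖b‖) (max ‖c‖ 1) with hA
  have hA1 : (1 : ℝ) ≤ A := le_trans (le_max_right _ _) (le_max_right _ _)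
  have hAa : ‖a‖ ≤ A := le_trans (le_max_left _ _) (le_max_left _ _)
  have hAb : ‖b‖ ≤ A := le_trans (le_max_right _ _) (le_max_left _ _)
  have hAc : ‖c‖ ≤ A := le_trans (le_max_left _ _) (le_max_right _ _)
  set N : ℕ := ⌈5 * A⌉₊ with hN
  -- eventual ratio bound
  have hstep : ∀ k : ℕ, N ≤ k → ‖coefHG a b c (k + 1)‖ ≤ 2 * ‖coefHG a b c k‖ := by
    intro k hk
    have hk5 : 5 * A ≤ (k : ℝ) := le_trans (Nat.le_ceil _) (Nat.cast_le.2 hk)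
    have hka : ‖a + k‖ ≤ A + k := le_trans (norm_add_le _ _)
      (by simp only [Complex.norm_natCast]; linarith)
    have hkb : ‖b + k‖ ≤ A + k := le_trans (norm_add_le _ _)
      (by simp only [Complex.norm_natCast]; linarith)
    have hkc : (k : ℝ) - A ≤ ‖c + k‖ := by
      have : ‖(k : ℂ)‖ - ‖-c‖ ≤ ‖(k : ℂ) - -c‖ := norm_sub_norm_le _ _
      simp only [norm_neg, sub_neg_eq_add, Complex.norm_natCast] at this
      calc (k : ℝ) - A ≤ ‖(k : ℂ)‖ - ‖c‖ := by
            simp only [Complex.norm_natCast]; linarith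
        _ ≤ ‖(k : ℂ) + c‖ := by rw [← sub_neg_eq_add] at this ⊢; simpa using this
        _ = ‖c + k‖ := by rw [add_comm]
    have hkey : ‖a + k‖ * ‖b + k‖ ≤ 2 * (‖c + k‖ * (k + 1)) := by
      have h1 : ‖a + k‖ * ‖b + k‖ ≤ (A + k) * (A + k) :=
        mul_le_mul hka hkb (norm_nonneg _) (by positivity)
      have h2 : ((k : ℝ) - A) * ((k : ℝ) + 1) ≤ ‖c + k‖ * ((k : ℝ) + 1) := by
        apply mul_le_mul_of_nonneg_right hkc; positivity
      nlinarith [norm_nonneg (a + (k : ℂ)), norm_nonneg (b + (k : ℂ))]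
    rw [coefHG_succ hc k, norm_mul]
    have hden : (0 : ℝ) < ‖(c + k) * ((k : ℂ) + 1)‖ := by
      apply norm_pos_iff.2
      apply mul_ne_zero (hc k)
      intro h
      have : ((k : ℝ) + 1) = 0 := by
        have := congrArg Complex.re h; simpa using this
      linarith [Nat.cast_nonneg (α := ℝ) k]
    have hratio : ‖(a + k) * (b + k) / ((c + k) * (k + 1))‖ ≤ 2 := by
      rw [norm_div, div_le_iff₀ hden, norm_mul, norm_mul]
      have : ‖(k : ℂ) + 1‖ = (k : ℝ) + 1 := by
        rw [show ((k : ℂ) + 1) = ((k + 1 : ℕ) : ℂ) by push_cast; ring, Complex.norm_natCast]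
        push_cast; ring
      rw [this]
      linarith [hkey]
    calc ‖coefHG a b c k‖ * ‖(a + k) * (b + k) / ((c + k) * (k + 1))‖
        ≤ ‖coefHG a b c k‖ * 2 := mul_le_mul_of_nonneg_left hratio (norm_nonneg _)
      _ = 2 * ‖coefHG a b c k‖ := by ring
  -- constant
  set C : ℝ := ∑ j ∈ Finset.range (N + 1), ‖coefHG a b c j‖ with hC
  have hC0 : 0 ≤ C := Finset.sum_nonneg fun _ _ => norm_nonneg _
  have hCle : ∀ j : ℕ, j ≤ N → ‖coefHG a b c j‖ ≤ C := by
    intro j hj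
    exact Finset.single_le_sum (f := fun j => ‖coefHG a b c j‖)
      (fun _ _ => norm_nonneg _) (Finset.mem_range.2 (Nat.lt_succ_of_le hj))
  refine ⟨C, hC0, ?_⟩
  have hge : ∀ k : ℕ, N ≤ k → ‖coefHG a b c k‖ ≤ C * 2 ^ k := by
    intro k hk
    induction k, hk using Nat.le_induction with
    | base =>
        calc ‖coefHG a b c N‖ ≤ C := hCle N le_rfl
          _ ≤ C * 2 ^ N := le_mul_of_one_le_right hC0 (one_le_pow₀ one_le_two)
    | succ k hk ih =>
        calc ‖coefHG a b c (k + 1)‖ ≤ 2 * ‖coefHG a b c k‖ := hstep k hk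
          _ ≤ 2 * (C * 2 ^ k) := by linarith
          _ = C * 2 ^ (k + 1) := by ring
  intro k
  rcases le_or_gt N k with h | h
  · exact hge k h
  · calc ‖coefHG a b c k‖ ≤ C := hCle k h.le
      _ ≤ C * 2 ^ k := le_mul_of_one_le_right hC0 (one_le_pow₀ one_le_two)

set_option maxHeartbeats 800000 in
lemma hyp2F1_sub_one_bound {a b c : ℂ} {C : ℝ} (hC0 : 0 ≤ C)
    (hbd : ∀ k : ℕ, ‖coefHG a b c k‖ ≤ C * 2 ^ k)
    {z : ℂ} (hz : ‖z‖ ≤ 1 / 4) :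
    ‖hyp2F1 a b c z - 1‖ ≤ 4 * C * ‖z‖ := by
  have hz2 : 2 * ‖z‖ ≤ 1 / 2 := by linarith
  have hz2' : 2 * ‖z‖ < 1 := by linarith
  have hz2'' : 0 ≤ 2 * ‖z‖ := by positivity
  have hterm : ∀ k : ℕ, ‖coefHG a b c k * z ^ k‖ ≤ C * (2 * ‖z‖) ^ k := by
    intro k
    rw [norm_mul, norm_pow, mul_pow, ← mul_assoc]
    exact mul_le_mul_of_nonneg_right (hbd k) (by positivity)
  have hsumgeo : Summable (fun k : ℕ => C * (2 * ‖z‖) ^ k) :=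
    (summable_geometric_of_lt_one hz2'' hz2').mul_left C
  have hsum : Summable (fun k : ℕ => coefHG a b c k * z ^ k) :=
    Summable.of_norm_bounded hsumgeo hterm
  have heq : hyp2F1 a b c z = ∑' k : ℕ, coefHG a b c k * z ^ k := by
    simp only [hyp2F1, coefHG]
  rw [heq, hsum.tsum_eq_zero_add, coefHG_zero, one_mul, pow_zero]
  rw [add_sub_cancel_left]
  have hsum1 : Summable (fun k : ℕ => coefHG a b c (k + 1) * z ^ (k + 1)) :=
    (summable_nat_add_iff 1).2 hsum
  have hsumn : Summable (fun k : ℕ => ‖coefHG a b c (k + 1) * z ^ (k + 1)‖) :=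
    ((summable_nat_add_iff 1).2 hsum.norm)
  have hsumg2 : Summable (fun k : ℕ => (2 * C * ‖z‖) * (2 * ‖z‖) ^ k) :=
    (summable_geometric_of_lt_one hz2'' hz2').mul_left _
  calc ‖∑' k : ℕ, coefHG a b c (k + 1) * z ^ (k + 1)‖
      ≤ ∑' k : ℕ, ‖coefHG a b c (k + 1) * z ^ (k + 1)‖ := norm_tsum_le_tsum_norm hsumn
    _ ≤ ∑' k : ℕ, (2 * C * ‖z‖) * (2 * ‖z‖) ^ k := by
        apply Summable.tsum_le_tsum _ hsumn hsumg2
        intro k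
        calc ‖coefHG a b c (k + 1) * z ^ (k + 1)‖ ≤ C * (2 * ‖z‖) ^ (k + 1) := hterm (k + 1)
          _ = (2 * C * ‖z‖) * (2 * ‖z‖) ^ k := by ring
    _ = (2 * C * ‖z‖) * (1 - 2 * ‖z‖)⁻¹ := by
        rw [tsum_mul_left, tsum_geometric_of_lt_one hz2'' hz2']
    _ ≤ (2 * C * ‖z‖) * 2 := by
        apply mul_le_mul_of_nonneg_left _ (by positivity)
        rw [inv_le_comm₀ (by linarith) (by norm_num)]
        linarith
    _ = 4 * C * ‖z‖ := by ring

lemma hyp2F1_tendsto (a b c : ℂ) (hc : ∀ k : ℕ, c + k ≠ 0) :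
    Tendsto (fun z : ℂ => hyp2F1 a b c z) (nhds 0) (nhds 1) := by
  obtain ⟨C, hC0, hbd⟩ := coefHG_bound a b c hc
  have key : Tendsto (fun z : ℂ => hyp2F1 a b c z - 1) (nhds 0) (nhds 0) := by
    apply squeeze_zero_norm' (a := fun z : ℂ => 4 * C * ‖z‖)
    · filter_upwards [Metric.ball_mem_nhds (0 : ℂ) (by norm_num : (0:ℝ) < 1/4)] with z hz
      apply hyp2F1_sub_one_bound hC0 hbd
      rw [Metric.mem_ball, dist_zero_right] at hz
      exact hz.le
    · have : Tendsto (fun z : ℂ => ‖z‖) (nhds 0) (nhds 0) := by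
        simpa using tendsto_norm_zero
      simpa using this.const_mul (4 * C)
  have := key.add (tendsto_const_nhds (x := (1 : ℂ)))
  simpa using this

end JacobiAux

theorem jacobiHCPhi_asymptotics (α β : ℝ) (lam : ℂ)
    (hlam : ∀ m : ℕ, 0 < m → lam ≠ (m : ℂ)) :
    Tendsto (fun t : ℝ =>
        Complex.exp ((((α : ℂ) + β + 1) - lam) * t) * jacobiHCPhi α β lam t)
      atTop (nhds 1) := by
  set ρ : ℂ := (α : ℂ) + β + 1 with hρ
  set a : ℂ := (ρ - lam) / 2
  set b : ℂ := ((α : ℂ) - β + 1 - lam) / 2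
  set c : ℂ := 1 - lam with hc_def
  have hc : ∀ k : ℕ, c + k ≠ 0 := by
    intro k h
    apply hlam (k + 1) (Nat.succ_pos k)
    have : lam = 1 + (k : ℂ) := by rw [hc_def] at h; linear_combination -h
    rw [this]; push_cast; ring
  -- the hypergeometric factor tends to 1
  have hz : Tendsto (fun t : ℝ => ((Real.cosh t ^ 2 : ℝ) : ℂ)⁻¹) atTop (nhds 0) := by
    have h1 : Tendsto (fun t : ℝ => (Real.cosh t ^ 2)⁻¹) atTop (nhds 0) := by
      apply Filter.Tendsto.comp tendsto_inv_atTop_zero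
      have hcosh : Tendsto Real.cosh atTop atTop := by
        apply tendsto_atTop_mono (fun t => ?_)
          (Real.tendsto_exp_atTop.atTop_div_const two_pos)
        rw [Real.cosh_eq]
        have := Real.exp_pos (-t)
        linarith
      exact (tendsto_pow_atTop two_ne_zero).comp hcosh
    have h2 : Tendsto (fun r : ℝ => ((r : ℂ))) (nhds 0) (nhds 0) := by
      simpa using Complex.continuous_ofReal.tendsto 0
    have := h2.comp h1
    convert this using 1
    funext t
    simp [Function.comp, Complex.ofReal_inv]
  have hF : Tendsto (fun t : ℝ => hyp2F1 a b c ((Real.cosh t ^ 2 : ℝ) : ℂ)⁻¹)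
      atTop (nhds 1) := (JacobiAux.hyp2F1_tendsto a b c hc).comp hz
  -- the exponential factor tends to 1
  have hcosh_pos : ∀ t : ℝ, 0 < 2 * Real.cosh t := fun t => by positivity
  have hgid : ∀ t : ℝ, Complex.exp ((ρ - lam) * t) *
      ((2 * Real.cosh t : ℝ) : ℂ) ^ (lam - ρ) =
      Complex.exp ((lam - ρ) * ((Real.log (1 + Real.exp (-2 * t)) : ℝ) : ℂ)) := by
    intro t
    have hpos := hcosh_pos t
    have hne : ((2 * Real.cosh t : ℝ) : ℂ) ≠ 0 := by
      simp only [ne_eq, Complex.ofReal_eq_zero]; linarith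
    rw [Complex.cpow_def_of_ne_zero hne, ← Complex.exp_add,
      ← Complex.ofReal_log hpos.le]
    congr 1
    have hlog : Real.log (2 * Real.cosh t) = t + Real.log (1 + Real.exp (-2 * t)) := by
      have h2c : 2 * Real.cosh t = Real.exp t * (1 + Real.exp (-2 * t)) := by
        rw [Real.cosh_eq]
        rw [show Real.exp (-2 * t) = Real.exp (-t) / Real.exp t by
          rw [← Real.exp_sub]; ring_nf]
        field_simp
      rw [h2c, Real.log_mul (Real.exp_ne_zero t) (by positivity), Real.log_exp]
    rw [hlog]
    push_cast
    ring
  have hg : Tendsto (fun t : ℝ => Complex.exp ((ρ - lam) * t) *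
      ((2 * Real.cosh t : ℝ) : ℂ) ^ (lam - ρ)) atTop (nhds 1) := by
    have hL : Tendsto (fun t : ℝ => Real.log (1 + Real.exp (-2 * t))) atTop (nhds 0) := by
      have h1 : Tendsto (fun t : ℝ => 1 + Real.exp (-2 * t)) atTop (nhds 1) := by
        have : Tendsto (fun t : ℝ => Real.exp (-2 * t)) atTop (nhds 0) := by
          apply Real.tendsto_exp_atBot.comp
          have h2t : Tendsto (fun t : ℝ => 2 * t) atTop atTop :=
            tendsto_id.const_mul_atTop two_pos
          have := tendsto_neg_atTop_atBot.comp h2t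
          apply this.congr
          intro t
          simp [Function.comp]
        simpa using tendsto_const_nhds.add this
      have := (Real.continuousAt_log (by norm_num : (1:ℝ) ≠ 0)).tendsto.comp h1
      simpa [Function.comp_def] using this
    have hLC : Tendsto (fun t : ℝ => (lam - ρ) * ((Real.log (1 + Real.exp (-2 * t)) : ℝ) : ℂ))
        atTop (nhds 0) := by
      have h2 : Tendsto (fun t : ℝ => ((Real.log (1 + Real.exp (-2 * t)) : ℝ) : ℂ))
          atTop (nhds 0) := by
        have := (Complex.continuous_ofReal.tendsto 0).comp hL
        simpa [Function.comp_def] using this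
      simpa using h2.const_mul (lam - ρ)
    have := (Complex.continuous_exp.tendsto 0).comp hLC
    simp only [Complex.exp_zero] at this
    apply this.congr
    intro t
    exact (hgid t).symm
  -- combine
  have heq : (fun t : ℝ => Complex.exp ((ρ - lam) * t) * jacobiHCPhi α β lam t) =
      fun t : ℝ => (Complex.exp ((ρ - lam) * t) *
        ((2 * Real.cosh t : ℝ) : ℂ) ^ (lam - ρ)) *
        hyp2F1 a b c ((Real.cosh t ^ 2 : ℝ) : ℂ)⁻¹ := by
    funext t
    rw [jacobiHCPhi]
    ring
  rw [heq]
  have := hg.mul hF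
  simpa using this
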